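/- Assume the Trudinger–Moser property holds with some constant ω ∈ (0,π]. Let (v_n) be a sequence in X with ‖v_n‖_X = 1 for all n, converging weakly in X to some v ∈ X (i.e. ⟨v_n, w⟩_X → ⟨v, w⟩_X for every w ∈ X) with 0 < ‖v‖_X < 1. Then for every 0 < α < 2πω and every 1 < p < (1 − ‖v‖_X²)^{−1}, the sequence (e^{α v_n²}) is bounded in L^p(0,1), i.e. sup_n ∫₀¹ e^{p α v_n²} dx < ∞. -/

import Mathlib

open MeasureTheory Real Set Filter Topology
open scoped ENNReal NNReal

noncomputable section

/-- Integrand of the squared Gagliardo `H^{1/2}` seminorm on `ℝ`. -/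
def gagKer (u : ℝ → ℝ) : ℝ × ℝ → ℝ :=
  fun p => (u p.1 - u p.2) ^ 2 / |p.1 - p.2| ^ 2

/-- Integrand of the Gagliardo inner product `⟨u,v⟩_X`. -/
def innerKer (u v : ℝ → ℝ) : ℝ × ℝ → ℝ :=
  fun p => (u p.1 - u p.2) * (v p.1 - v p.2) / |p.1 - p.2| ^ 2

/-- `u ∈ H^{1/2}(ℝ)` : `u ∈ L²(ℝ)` with finite Gagliardo seminorm. -/
def memH (u : ℝ → ℝ) : Prop :=
  Measurable u ∧ Integrable (fun x => (u x) ^ 2) ∧ Integrable (gagKer u)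

/-- Squared Gagliardo seminorm `[u]²`. -/
def gagSq (u : ℝ → ℝ) : ℝ := ∫ p : ℝ × ℝ, gagKer u p

/-- Gagliardo seminorm `[u]`, i.e. the norm `‖u‖_X`. -/
def gagNorm (u : ℝ → ℝ) : ℝ := Real.sqrt (gagSq u)

/-- Inner product `⟨u, v⟩_X`. -/
def innerX (u v : ℝ → ℝ) : ℝ := ∫ p : ℝ × ℝ, innerKer u v p

/-- `u ∈ X` : `u ∈ H^{1/2}(ℝ)` and `u = 0` a.e. outside `(0,1)`. -/
def memX (u : ℝ → ℝ) : Prop :=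
  memH u ∧ ∀ᵐ x : ℝ, x ∉ Ioo (0 : ℝ) 1 → u x = 0

/-- `λ₁ = inf {[u]² : u ∈ X, ‖u‖_{L²(0,1)} = 1}`. -/
def lam1 : ℝ :=
  sInf { t : ℝ | ∃ u : ℝ → ℝ, memX u ∧ (∫ x in Ioo (0 : ℝ) 1, (u x) ^ 2) = 1 ∧ gagSq u = t }

/-- Trudinger–Moser property with constant `ω`. -/
def TMprop (ω : ℝ) : Prop :=
  ∀ α : ℝ, 0 < α → α < 2 * π * ω →
    ∃ K : ℝ, 0 < K ∧ ∀ u : ℝ → ℝ, memX u → gagNorm u ≤ 1 →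
      (∫⁻ x in Ioo (0 : ℝ) 1, ENNReal.ofReal (exp (α * (u x) ^ 2))) ≤ ENNReal.ofReal K

/-- The primitive `F(t) = ∫₀ᵗ f(τ) dτ`. -/
def primF (f : ℝ → ℝ) : ℝ → ℝ := fun t => ∫ τ in (0 : ℝ)..t, f τ

/-- Hypotheses (H). -/
def HypH (f : ℝ → ℝ) : Prop :=
  Continuous f ∧ f 0 = 0 ∧
  (∃ t₀ > (0 : ℝ), ∃ M > (0 : ℝ),
    ∀ t : ℝ, t₀ ≤ |t| → 0 < primF f t ∧ primF f t ≤ M * |f t|) ∧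
  (∀ t : ℝ, t ≠ 0 → 0 < 2 * primF f t ∧ 2 * primF f t ≤ f t * t) ∧
  (Filter.limsup (fun t => primF f t / t ^ 2) (𝓝[≠] (0 : ℝ)) < lam1 / (4 * π)) ∧
  (∀ α : ℝ, 0 < α →
    Filter.Tendsto (fun t => |f t| * exp (-α * t ^ 2)) (Filter.cocompact ℝ) (𝓝 0))

/-- Hypotheses (H') with Trudinger–Moser constant `ω`. -/
def HypH' (f : ℝ → ℝ) (ω : ℝ) : Prop :=
  Continuous f ∧ f 0 = 0 ∧
  (∃ t₀ > (0 : ℝ), ∃ M > (0 : ℝ),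
    ∀ t : ℝ, t₀ ≤ |t| → 0 < primF f t ∧ primF f t ≤ M * |f t|) ∧
  (∀ t : ℝ, t ≠ 0 → 0 < 2 * primF f t ∧ 2 * primF f t ≤ f t * t) ∧
  (Filter.limsup (fun t => primF f t / t ^ 2) (𝓝[≠] (0 : ℝ)) < lam1 / (4 * π)) ∧
  ∃ α₀ : ℝ, 0 < α₀ ∧ α₀ < 2 * π * ω ∧
    (∀ α : ℝ, 0 < α → α < α₀ →
      Filter.Tendsto (fun t => |f t| * exp (-α * t ^ 2)) (Filter.cocompact ℝ) Filter.atTop) ∧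
    (∀ α : ℝ, α₀ < α →
      Filter.Tendsto (fun t => |f t| * exp (-α * t ^ 2)) (Filter.cocompact ℝ) (𝓝 0)) ∧
    ∃ ψ : ℝ → ℝ, memX ψ ∧ gagNorm ψ = 1 ∧
      ∃ b : ℝ, b < ω / (2 * α₀) ∧ ∀ t : ℝ, 0 < t →
        t ^ 2 / (4 * π) - (∫ x in Ioo (0 : ℝ) 1, primF f (t * ψ x)) ≤ b

/-- `u` is a (weak) solution of `(-Δ)^{1/2} u = f(u)` in `(0,1)`, `u = 0` outside. -/
def IsWeakSolution (f u : ℝ → ℝ) : Prop :=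
  memX u ∧ ∀ v : ℝ → ℝ, memX v →
    IntegrableOn (fun x => f (u x) * v x) (Ioo (0 : ℝ) 1) ∧
    innerX u v / (2 * π) = ∫ x in Ioo (0 : ℝ) 1, f (u x) * v x

/-- The energy functional `φ(u) = ‖u‖_X²/(4π) - ∫₀¹ F(u) dx`. -/
def phi (f u : ℝ → ℝ) : ℝ :=
  gagSq u / (4 * π) - ∫ x in Ioo (0 : ℝ) 1, primF f (u x)

/-- `⟨φ'(u), v⟩ = (1/(2π))⟨u,v⟩_X - ∫₀¹ f(u) v dx`. -/
def phiDeriv (f u v : ℝ → ℝ) : ℝ :=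
  innerX u v / (2 * π) - ∫ x in Ioo (0 : ℝ) 1, f (u x) * v x

/-- The Palais–Smale condition at level `c`. -/
def PalaisSmaleAt (f : ℝ → ℝ) (c : ℝ) : Prop :=
  ∀ u : ℕ → ℝ → ℝ, (∀ n, memX (u n)) →
    Filter.Tendsto (fun n => phi f (u n)) Filter.atTop (𝓝 c) →
    (∃ ε : ℕ → ℝ, Filter.Tendsto ε Filter.atTop (𝓝 0) ∧
      ∀ n, ∀ v : ℝ → ℝ, memX v → gagNorm v ≤ 1 → |phiDeriv f (u n) v| ≤ ε n) →
    ∃ w : ℝ → ℝ, memX w ∧ ∃ g : ℕ → ℕ, StrictMono g ∧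
      Filter.Tendsto (fun k => gagNorm (fun x => u (g k) x - w x)) Filter.atTop (𝓝 0)

-- ### helpers

lemma gagKer_nonneg (u : ℝ → ℝ) (p : ℝ × ℝ) : 0 ≤ gagKer u p :=
  div_nonneg (sq_nonneg _) (sq_nonneg _)

lemma gagSq_nonneg (u : ℝ → ℝ) : 0 ≤ gagSq u :=
  integral_nonneg (gagKer_nonneg u)

lemma gagNorm_sq (u : ℝ → ℝ) : gagNorm u ^ 2 = gagSq u :=
  Real.sq_sqrt (gagSq_nonneg u)

lemma measurable_gagKer {u : ℝ → ℝ} (hu : Measurable u) : Measurable (gagKer u) :=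
  (((hu.comp measurable_fst).sub (hu.comp measurable_snd)).pow_const 2).div
    (((measurable_fst.sub measurable_snd).abs).pow_const 2)

lemma measurable_innerKer {u v : ℝ → ℝ} (hu : Measurable u) (hv : Measurable v) :
    Measurable (innerKer u v) :=
  ((((hu.comp measurable_fst).sub (hu.comp measurable_snd)).mul
    ((hv.comp measurable_fst).sub (hv.comp measurable_snd))).div
    (((measurable_fst.sub measurable_snd).abs).pow_const 2))

lemma div_le_div_nn {a b c : ℝ} (h : a ≤ b) (hc : 0 ≤ c) : a / c ≤ b / c := by
  rcases hc.eq_or_lt with h0 | h0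
  · simp [← h0]
  · exact (div_le_div_iff_of_pos_right h0).mpr h

lemma abs_innerKer_le (u v : ℝ → ℝ) (p : ℝ × ℝ) :
    |innerKer u v p| ≤ (gagKer u p + gagKer v p) / 2 := by
  have key : ∀ a b e : ℝ, 0 ≤ e → |a * b / e| ≤ (a ^ 2 / e + b ^ 2 / e) / 2 := by
    intro a b e he
    have h1 : (a ^ 2 / e + b ^ 2 / e) / 2 = (a ^ 2 + b ^ 2) / 2 / e := by ring
    rw [h1, abs_div, abs_of_nonneg he, abs_mul]
    apply div_le_div_nn _ he
    nlinarith [sq_nonneg (|a| - |b|), sq_abs a, sq_abs b]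
  exact key _ _ _ (sq_nonneg _)

lemma integrable_innerKer {u v : ℝ → ℝ} (hu : Measurable u) (hv : Measurable v)
    (hgu : Integrable (gagKer u)) (hgv : Integrable (gagKer v)) :
    Integrable (innerKer u v) := by
  refine Integrable.mono' ((hgu.add hgv).div_const 2)
    (measurable_innerKer hu hv).aestronglyMeasurable (ae_of_all _ fun p => ?_)
  rw [Real.norm_eq_abs]
  exact abs_innerKer_le u v p

lemma gagKer_sub (u w : ℝ → ℝ) :
    gagKer (fun x => u x - w x) =
      fun p => gagKer u p - 2 * innerKer u w p + gagKer w p := by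
  funext p; unfold gagKer innerKer; ring

lemma gagKer_smul (c : ℝ) (u : ℝ → ℝ) :
    gagKer (fun x => c * u x) = fun p => c ^ 2 * gagKer u p := by
  funext p; unfold gagKer; ring

lemma gagSq_smul (c : ℝ) (u : ℝ → ℝ) :
    gagSq (fun x => c * u x) = c ^ 2 * gagSq u := by
  unfold gagSq
  rw [gagKer_smul]
  exact integral_const_mul _ _

lemma memX_smul {u : ℝ → ℝ} (hu : memX u) (c : ℝ) : memX (fun x => c * u x) := by
  obtain ⟨⟨hm, hL2, hg⟩, hvan⟩ := hu
  refine ⟨⟨measurable_const.mul hm, ?_, ?_⟩, ?_⟩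
  · have : (fun x => (c * u x) ^ 2) = fun x => c ^ 2 * (u x) ^ 2 := by funext x; ring
    rw [this]; exact hL2.const_mul _
  · rw [gagKer_smul]; exact hg.const_mul _
  · filter_upwards [hvan] with x hx hxn
    rw [hx hxn, mul_zero]

lemma memX_sub {u w : ℝ → ℝ} (hu : memX u) (hw : memX w) :
    memX (fun x => u x - w x) := by
  obtain ⟨⟨hm, hL2, hg⟩, hvan⟩ := hu
  obtain ⟨⟨hm', hL2', hg'⟩, hvan'⟩ := hw
  refine ⟨⟨hm.sub hm', ?_, ?_⟩, ?_⟩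
  · have hb : Integrable (fun x => 2 * u x ^ 2 + 2 * w x ^ 2) :=
      (hL2.const_mul 2).add (hL2'.const_mul 2)
    refine Integrable.mono' hb
      ((hm.sub hm').pow_const 2).aestronglyMeasurable (ae_of_all _ fun x => ?_)
    show |(u x - w x) ^ 2| ≤ 2 * u x ^ 2 + 2 * w x ^ 2
    rw [abs_of_nonneg (sq_nonneg _)]
    nlinarith [sq_nonneg (u x + w x)]
  · rw [gagKer_sub]
    exact (hg.sub ((integrable_innerKer hm hm' hg hg').const_mul 2)).add hg'
  · filter_upwards [hvan, hvan'] with x hx hx' hxn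
    rw [hx hxn, hx' hxn, sub_zero]

lemma gagSq_sub {u w : ℝ → ℝ} (hu : memX u) (hw : memX w) :
    gagSq (fun x => u x - w x) = gagSq u - 2 * innerX u w + gagSq w := by
  obtain ⟨⟨hm, hL2, hg⟩, -⟩ := hu
  obtain ⟨⟨hm', hL2', hg'⟩, -⟩ := hw
  have hik := integrable_innerKer hm hm' hg hg'
  have h2 : Integrable (fun p => 2 * innerKer u w p) := hik.const_mul 2
  have h1 : Integrable (fun p => gagKer u p - 2 * innerKer u w p) := hg.sub h2
  unfold gagSq innerX
  rw [gagKer_sub]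
  rw [integral_add h1 hg', integral_sub hg h2, integral_const_mul]

lemma innerX_self (u : ℝ → ℝ) : innerX u u = gagSq u := by
  unfold innerX gagSq innerKer gagKer
  congr 1; funext p; ring

-- ### truncation

def trunc (M t : ℝ) : ℝ := max (t - M) 0 + min (t + M) 0

lemma continuous_trunc (M : ℝ) : Continuous (trunc M) :=
  ((continuous_id.sub continuous_const).max continuous_const).add
    ((continuous_id.add continuous_const).min continuous_const)

lemma trunc_abs_le {M : ℝ} (hM : 0 ≤ M) (t : ℝ) : |trunc M t| ≤ |t| := by
  unfold trunc
  rcases le_total t (-M) with h | h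
  · rw [max_eq_right (by linarith), min_eq_left (by linarith), zero_add,
      abs_of_nonpos (by linarith), abs_of_nonpos (by linarith)]
    linarith
  rcases le_total M t with h2 | h2
  · rw [max_eq_left (by linarith), min_eq_right (by linarith), add_zero,
      abs_of_nonneg (by linarith), abs_of_nonneg (by linarith)]
    linarith
  · rw [max_eq_right (by linarith), min_eq_right (by linarith), add_zero, abs_zero]
    exact abs_nonneg t

lemma trunc_eq_zero {M t : ℝ} (h : |t| ≤ M) : trunc M t = 0 := by
  obtain ⟨h1, h2⟩ := abs_le.mp h
  unfold trunc
  rw [max_eq_right (by linarith), min_eq_right (by linarith), add_zero]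

lemma trunc_self_sub {M : ℝ} (hM : 0 ≤ M) (t : ℝ) : |t - trunc M t| ≤ M := by
  unfold trunc
  rcases le_total t (-M) with h | h
  · rw [max_eq_right (by linarith), min_eq_left (by linarith), zero_add]
    rw [show t - (t + M) = -M by ring, abs_neg, abs_of_nonneg hM]
  rcases le_total M t with h2 | h2
  · rw [max_eq_left (by linarith), min_eq_right (by linarith), add_zero]
    rw [show t - (t - M) = M by ring, abs_of_nonneg hM]
  · rw [max_eq_right (by linarith), min_eq_right (by linarith), add_zero, sub_zero]
    exact abs_le.mpr ⟨by linarith, h2⟩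

lemma trunc_lip (M a b : ℝ) : |trunc M a - trunc M b| ≤ 2 * |a - b| := by
  unfold trunc
  have h1 : |max (a - M) 0 - max (b - M) 0| ≤ |a - b| := by
    have := abs_max_sub_max_le_abs (a - M) (b - M) 0
    simpa using this
  have h2 : |min (a + M) 0 - min (b + M) 0| ≤ |a - b| := by
    have := abs_min_sub_min_le_max (a + M) 0 (b + M) 0
    simpa using this
  calc |max (a - M) 0 + min (a + M) 0 - (max (b - M) 0 + min (b + M) 0)|
      = |(max (a - M) 0 - max (b - M) 0) + (min (a + M) 0 - min (b + M) 0)| := by ring_nf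
    _ ≤ |max (a - M) 0 - max (b - M) 0| + |min (a + M) 0 - min (b + M) 0| := abs_add_le _ _
    _ ≤ 2 * |a - b| := by linarith

lemma gagKer_trunc_le {u : ℝ → ℝ} (M : ℝ) (p : ℝ × ℝ) :
    gagKer (fun x => trunc M (u x)) p ≤ 4 * gagKer u p := by
  unfold gagKer
  rw [show (4 : ℝ) * ((u p.1 - u p.2) ^ 2 / |p.1 - p.2| ^ 2)
      = 4 * (u p.1 - u p.2) ^ 2 / |p.1 - p.2| ^ 2 by ring]
  apply div_le_div_nn _ (sq_nonneg _)
  have h := trunc_lip M (u p.1) (u p.2)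
  calc (trunc M (u p.1) - trunc M (u p.2)) ^ 2
      = |trunc M (u p.1) - trunc M (u p.2)| ^ 2 := (sq_abs _).symm
    _ ≤ (2 * |u p.1 - u p.2|) ^ 2 := by
        apply pow_le_pow_left₀ (abs_nonneg _) h
    _ = 4 * (u p.1 - u p.2) ^ 2 := by rw [mul_pow, sq_abs]; ring

lemma memX_trunc {u : ℝ → ℝ} (hu : memX u) {M : ℝ} (hM : 0 ≤ M) :
    memX (fun x => trunc M (u x)) := by
  obtain ⟨⟨hm, hL2, hg⟩, hvan⟩ := hu
  have hmt : Measurable fun x => trunc M (u x) :=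
    (continuous_trunc M).measurable.comp hm
  refine ⟨⟨hmt, ?_, ?_⟩, ?_⟩
  · refine Integrable.mono' hL2 (hmt.pow_const 2).aestronglyMeasurable
      (ae_of_all _ fun x => ?_)
    show |trunc M (u x) ^ 2| ≤ u x ^ 2
    rw [abs_of_nonneg (sq_nonneg _), ← sq_abs (trunc M (u x)), ← sq_abs (u x)]
    exact pow_le_pow_left₀ (abs_nonneg _) (trunc_abs_le hM (u x)) 2
  · refine Integrable.mono' (hg.const_mul 4)
      (measurable_gagKer hmt).aestronglyMeasurable (ae_of_all _ fun p => ?_)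
    rw [Real.norm_eq_abs, abs_of_nonneg (gagKer_nonneg _ _)]
    exact gagKer_trunc_le M p
  · filter_upwards [hvan] with x hx hxn
    rw [hx hxn]
    exact trunc_eq_zero (by simpa using hM)

lemma gagSq_trunc_tendsto {u : ℝ → ℝ} (hu : memX u) :
    Tendsto (fun k : ℕ => gagSq (fun x => trunc (k : ℝ) (u x))) atTop (𝓝 0) := by
  obtain ⟨⟨hm, hL2, hg⟩, hvan⟩ := hu
  have h := tendsto_integral_of_dominated_convergence (μ := volume)
    (F := fun k : ℕ => gagKer (fun x => trunc (k : ℝ) (u x))) (f := fun _ => (0 : ℝ))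
    (bound := fun p => 4 * gagKer u p)
    (fun k => (measurable_gagKer ((continuous_trunc _).measurable.comp hm)).aestronglyMeasurable)
    (hg.const_mul 4)
    (fun k => ae_of_all _ fun p => by
      rw [Real.norm_eq_abs, abs_of_nonneg (gagKer_nonneg _ _)]
      exact gagKer_trunc_le _ p)
    (ae_of_all _ fun p => by
      obtain ⟨N, hN⟩ := exists_nat_ge (max |u p.1| |u p.2|)
      refine Tendsto.congr' ?_ tendsto_const_nhds
      filter_upwards [eventually_ge_atTop N] with k hk
      have hk' : max |u p.1| |u p.2| ≤ (k : ℝ) :=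
        hN.trans (Nat.cast_le.mpr hk)
      show (0 : ℝ) = gagKer (fun x => trunc (k : ℝ) (u x)) p
      unfold gagKer
      simp only []
      rw [trunc_eq_zero ((le_max_left _ _).trans hk'),
        trunc_eq_zero ((le_max_right _ _).trans hk')]
      simp)
  simpa [gagSq] using h

lemma expFinite {ω : ℝ} (hω0 : 0 < ω) (hTM : TMprop ω) {u : ℝ → ℝ} (hu : memX u)
    {c : ℝ} (hc : 0 < c) :
    ∃ C : ℝ, (∫⁻ x in Ioo (0 : ℝ) 1, ENNReal.ofReal (exp (c * (u x) ^ 2)))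
      ≤ ENNReal.ofReal C := by
  have hπω : 0 < π * ω := mul_pos pi_pos hω0
  obtain ⟨K, hK0, hK⟩ := hTM (π * ω) hπω (by nlinarith)
  have h1 : (0 : ℝ) < π * ω / (2 * c) := by positivity
  obtain ⟨k, hk⟩ := ((gagSq_trunc_tendsto hu).eventually_lt_const h1).exists
  set b : ℝ → ℝ := fun x => trunc (k : ℝ) (u x) with hb
  have hbX : memX b := memX_trunc hu (Nat.cast_nonneg k)
  set t : ℝ := Real.sqrt (2 * c / (π * ω)) with ht
  have ht2 : t ^ 2 = 2 * c / (π * ω) := Real.sq_sqrt (by positivity)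
  set z : ℝ → ℝ := fun x => t * b x with hz
  have hzX : memX z := memX_smul hbX t
  have hz1 : gagNorm z ≤ 1 := by
    rw [gagNorm]
    rw [Real.sqrt_le_one]
    rw [hz, gagSq_smul, ht2]
    calc 2 * c / (π * ω) * gagSq b ≤ 2 * c / (π * ω) * (π * ω / (2 * c)) := by
          apply mul_le_mul_of_nonneg_left hk.le (by positivity)
      _ = 1 := by field_simp
  have hzsq : ∀ x, π * ω * z x ^ 2 = 2 * c * b x ^ 2 := by
    intro x
    rw [hz]
    simp only []
    rw [mul_pow, ht2]
    field_simp
  have key : ∀ x, c * u x ^ 2 ≤ 2 * c * (k : ℝ) ^ 2 + π * ω * z x ^ 2 := by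
    intro x
    rw [hzsq x]
    have h4 := trunc_self_sub (M := (k : ℝ)) (Nat.cast_nonneg k) (u x)
    have h5 : (u x - b x) ^ 2 ≤ (k : ℝ) ^ 2 := by
      obtain ⟨ha, hb'⟩ := abs_le.mp h4
      nlinarith
    nlinarith [sq_nonneg (u x - 2 * b x), hc.le, h5]
  have hzm : Measurable fun x => ENNReal.ofReal (exp (π * ω * z x ^ 2)) := by
    apply ENNReal.measurable_ofReal.comp
    exact Real.measurable_exp.comp
      ((measurable_const.mul ((hzX.1.1).pow_const 2)))
  refine ⟨exp (2 * c * (k : ℝ) ^ 2) * K, ?_⟩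
  calc (∫⁻ x in Ioo (0 : ℝ) 1, ENNReal.ofReal (exp (c * (u x) ^ 2)))
      ≤ ∫⁻ x in Ioo (0 : ℝ) 1,
          ENNReal.ofReal (exp (2 * c * (k : ℝ) ^ 2)) * ENNReal.ofReal (exp (π * ω * z x ^ 2)) := by
        apply lintegral_mono
        intro x
        simp only []
        rw [← ENNReal.ofReal_mul (exp_nonneg _), ← exp_add]
        exact ENNReal.ofReal_le_ofReal (exp_le_exp.mpr (key x))
    _ = ENNReal.ofReal (exp (2 * c * (k : ℝ) ^ 2)) *
          ∫⁻ x in Ioo (0 : ℝ) 1, ENNReal.ofReal (exp (π * ω * z x ^ 2)) :=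
        lintegral_const_mul _ hzm
    _ ≤ ENNReal.ofReal (exp (2 * c * (k : ℝ) ^ 2)) * ENNReal.ofReal K :=
        mul_le_mul_right (hK z hzX hz1) _
    _ = ENNReal.ofReal (exp (2 * c * (k : ℝ) ^ 2) * K) :=
        (ENNReal.ofReal_mul (exp_nonneg _)).symm

lemma young_aux {e a b : ℝ} (he : 0 < e) :
    a ^ 2 ≤ (1 + e) * (a - b) ^ 2 + (1 + e⁻¹) * b ^ 2 := by
  have hee : e * e⁻¹ = 1 := mul_inv_cancel₀ he.ne'
  have hi : 0 < e⁻¹ := inv_pos.mpr he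
  nlinarith [sq_nonneg (e * (a - b) - b), he, hee, hi, sq_nonneg (a - b), sq_nonneg b]

lemma cube_aux {e : ℝ} (h0 : 0 < e) (h1 : e ≤ 1) : (1 + e) ^ 3 ≤ 1 + 7 * e := by
  nlinarith [mul_le_mul_of_nonneg_left h1 h0.le, sq_nonneg e, h0.le]

/-- Lions-type lemma (Lemma 2.6). -/
theorem statement9 (ω : ℝ) (hω0 : 0 < ω) (hωπ : ω ≤ π) (hTM : TMprop ω)
    (v : ℕ → ℝ → ℝ) (hvX : ∀ n, memX (v n)) (hvnorm : ∀ n, gagNorm (v n) = 1)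
    (w : ℝ → ℝ) (hwX : memX w)
    (hweak : ∀ z : ℝ → ℝ, memX z →
      Filter.Tendsto (fun n => innerX (v n) z) Filter.atTop (𝓝 (innerX w z)))
    (hw0 : 0 < gagNorm w) (hw1 : gagNorm w < 1)
    (α : ℝ) (hα0 : 0 < α) (hα : α < 2 * π * ω)
    (p : ℝ) (hp1 : 1 < p) (hp : p < (1 - gagNorm w ^ 2)⁻¹) :
    ∃ C : ℝ, ∀ n : ℕ,
      (∫⁻ x in Ioo (0 : ℝ) 1, ENNReal.ofReal (exp (p * α * (v n x) ^ 2))) ≤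
        ENNReal.ofReal C := by
  have hp0 : 0 < p := lt_trans one_pos hp1
  have hpα : 0 < p * α := mul_pos hp0 hα0
  set L : ℝ := 1 - gagNorm w ^ 2 with hLdef
  have hL0 : 0 < L := by
    have := gagNorm_sq w
    nlinarith [hw0, hw1]
  have hpL : p * L < 1 := by
    calc p * L < L⁻¹ * L := mul_lt_mul_of_pos_right hp hL0
      _ = 1 := inv_mul_cancel₀ hL0.ne'
  -- convergence of d n := ‖v n - w‖²
  have hvsq : ∀ n, gagSq (v n) = 1 := fun n => Real.sqrt_eq_one.mp (hvnorm n)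
  set d : ℕ → ℝ := fun n => gagSq (fun x => v n x - w x) with hd
  have hdn : ∀ n, d n = 1 - 2 * innerX (v n) w + gagSq w := by
    intro n
    rw [hd]
    simp only []
    rw [gagSq_sub (hvX n) hwX, hvsq n]
  have hlim : Tendsto d atTop (𝓝 L) := by
    have h2 := hweak w hwX
    rw [innerX_self w] at h2
    have h3 : Tendsto (fun n => 1 - 2 * innerX (v n) w + gagSq w) atTop
        (𝓝 (1 - 2 * gagSq w + gagSq w)) :=
      (tendsto_const_nhds.sub (h2.const_mul 2)).add tendsto_const_nhds
    have h4 : (1 : ℝ) - 2 * gagSq w + gagSq w = L := by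
      rw [hLdef, ← gagNorm_sq w]; ring
    rw [h4] at h3
    exact h3.congr fun n => (hdn n).symm
  -- parameters
  set A : ℝ := p * α * L with hA
  have hA0 : 0 < A := mul_pos hpα hL0
  have hAB : A < 2 * π * ω := by nlinarith
  set q : ℝ := 2 * π * ω / A with hqdef
  have hq1 : 1 < q := (one_lt_div hA0).mpr hAB
  set e : ℝ := min 1 ((q - 1) / 8) with hedef
  have he0 : 0 < e := lt_min one_pos (by linarith)
  have he1 : e ≤ 1 := min_le_left _ _
  have he8 : 8 * e ≤ q - 1 := by
    have := min_le_right 1 ((q - 1) / 8)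
    linarith
  set r : ℝ := 1 + e with hrdef
  have hr1 : 1 < r := by linarith
  have hrr' : r.HolderConjugate (r / (r - 1)) :=
    (Real.holderConjugate_iff_eq_conjExponent hr1).mpr rfl
  set r' : ℝ := r / (r - 1) with hr'def
  have hr'1 : 1 < r' := hrr'.symm.lt
  set α₁ : ℝ := r * (1 + e) * p * α * (L + L * e) with hα₁def
  have hα₁0 : 0 < α₁ := by
    apply mul_pos (mul_pos (mul_pos (mul_pos (by linarith) (by linarith)) hp0) hα0)
    nlinarith
  have hα₁B : α₁ < 2 * π * ω := by
    have hexp : α₁ = (1 + e) ^ 3 * A := by rw [hα₁def, hA, hrdef]; ring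
    have h7 : (1 + e) ^ 3 ≤ 1 + 7 * e := cube_aux he0 he1
    have h8 : (1 + e) ^ 3 * A ≤ (1 + 7 * e) * A := mul_le_mul_of_nonneg_right h7 hA0.le
    have h9 : (1 + 7 * e) * A < q * A := mul_lt_mul_of_pos_right (by linarith) hA0
    have h10 : q * A = 2 * π * ω := div_mul_cancel₀ _ hA0.ne'
    linarith
  obtain ⟨K₁, hK₁0, hK₁⟩ := hTM α₁ hα₁0 hα₁B
  -- second factor : fixed function w
  have hinv0 : 0 < e⁻¹ := inv_pos.mpr he0
  have hc₂ : 0 < r' * (1 + e⁻¹) * p * α :=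
    mul_pos (mul_pos (mul_pos (by linarith) (by linarith)) hp0) hα0
  obtain ⟨C₂, hC₂⟩ := expFinite hω0 hTM hwX hc₂
  -- eventual control of d n
  have hev : ∀ᶠ n in atTop, d n < L + L * e ∧ 0 < d n :=
    (hlim.eventually_lt_const (by nlinarith)).and (hlim.eventually_const_lt hL0)
  obtain ⟨N, hN⟩ := eventually_atTop.mp hev
  -- the uniform bound for n ≥ N
  have hmain : ∀ n, N ≤ n →
      (∫⁻ x in Ioo (0 : ℝ) 1, ENNReal.ofReal (exp (p * α * (v n x) ^ 2))) ≤
        ENNReal.ofReal (max K₁ 1 * max C₂ 1) := by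
    intro n hn
    obtain ⟨hdlt, hdpos⟩ := hN n hn
    have hVW : memX (fun x => v n x - w x) := memX_sub (hvX n) hwX
    set dn : ℝ := d n with hdndef
    have hsd : Real.sqrt dn ^ 2 = dn := Real.sq_sqrt hdpos.le
    have hsd0 : 0 < Real.sqrt dn := Real.sqrt_pos.mpr hdpos
    set un : ℝ → ℝ := fun x => (Real.sqrt dn)⁻¹ * (v n x - w x) with hundef
    have hunX : memX un := memX_smul hVW _
    have hun1 : gagNorm un ≤ 1 := by
      rw [gagNorm, Real.sqrt_le_one]
      rw [hundef, gagSq_smul, inv_pow, hsd]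
      rw [show gagSq (fun x => v n x - w x) = dn from rfl]
      rw [inv_mul_cancel₀ hdpos.ne']
    have hvw_sq : ∀ x, (v n x - w x) ^ 2 = dn * un x ^ 2 := by
      intro x
      rw [hundef]
      simp only []
      rw [mul_pow, inv_pow, hsd]
      field_simp
    -- pointwise Young inequality
    have hYoung : ∀ x, p * α * v n x ^ 2 ≤
        (1 + e) * p * α * (v n x - w x) ^ 2 + (1 + e⁻¹) * p * α * w x ^ 2 := by
      intro x
      have base : v n x ^ 2 ≤
          (1 + e) * (v n x - w x) ^ 2 + (1 + e⁻¹) * w x ^ 2 := young_aux he0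
      calc p * α * v n x ^ 2
          ≤ p * α * ((1 + e) * (v n x - w x) ^ 2 + (1 + e⁻¹) * w x ^ 2) :=
            mul_le_mul_of_nonneg_left base hpα.le
        _ = (1 + e) * p * α * (v n x - w x) ^ 2 + (1 + e⁻¹) * p * α * w x ^ 2 := by
            ring
    -- Hölder
    set f : ℝ → ℝ≥0∞ :=
      fun x => ENNReal.ofReal (exp ((1 + e) * p * α * (v n x - w x) ^ 2)) with hfdef
    set g : ℝ → ℝ≥0∞ :=
      fun x => ENNReal.ofReal (exp ((1 + e⁻¹) * p * α * w x ^ 2)) with hgdef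
    have hfm : Measurable f := ENNReal.measurable_ofReal.comp (Real.measurable_exp.comp
      (measurable_const.mul (((hvX n).1.1.sub hwX.1.1).pow_const 2)))
    have hgm : Measurable g := ENNReal.measurable_ofReal.comp (Real.measurable_exp.comp
      (measurable_const.mul ((hwX.1.1).pow_const 2)))
    have step1 : (∫⁻ x in Ioo (0 : ℝ) 1, ENNReal.ofReal (exp (p * α * (v n x) ^ 2))) ≤
        ∫⁻ x in Ioo (0 : ℝ) 1, (f * g) x := by
      apply lintegral_mono
      intro x
      simp only [Pi.mul_apply, hfdef, hgdef]
      rw [← ENNReal.ofReal_mul (exp_nonneg _), ← exp_add]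
      exact ENNReal.ofReal_le_ofReal (exp_le_exp.mpr (hYoung x))
    have step2 := ENNReal.lintegral_mul_le_Lp_mul_Lq
      (volume.restrict (Ioo (0 : ℝ) 1)) hrr' hfm.aemeasurable hgm.aemeasurable
    have hfb : (∫⁻ x in Ioo (0 : ℝ) 1, f x ^ r) ≤ ENNReal.ofReal K₁ := by
      have hcoef : r * ((1 + e) * p * α) * dn ≤ α₁ := by
        rw [hα₁def]
        calc r * ((1 + e) * p * α) * dn ≤ r * ((1 + e) * p * α) * (L + L * e) := by
              apply mul_le_mul_of_nonneg_left hdlt.le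
              positivity
          _ = r * (1 + e) * p * α * (L + L * e) := by ring
      calc (∫⁻ x in Ioo (0 : ℝ) 1, f x ^ r)
          ≤ ∫⁻ x in Ioo (0 : ℝ) 1, ENNReal.ofReal (exp (α₁ * un x ^ 2)) := by
            apply lintegral_mono
            intro x
            rw [hfdef]
            simp only []
            rw [ENNReal.ofReal_rpow_of_pos (exp_pos _), ← Real.exp_mul]
            apply ENNReal.ofReal_le_ofReal
            apply exp_le_exp.mpr
            rw [show (1 + e) * p * α * (v n x - w x) ^ 2 * r
                = r * ((1 + e) * p * α) * (v n x - w x) ^ 2 by ring, hvw_sq x]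
            calc r * ((1 + e) * p * α) * (dn * un x ^ 2)
                = r * ((1 + e) * p * α) * dn * un x ^ 2 := by ring
              _ ≤ α₁ * un x ^ 2 := mul_le_mul_of_nonneg_right hcoef (sq_nonneg _)
        _ ≤ ENNReal.ofReal K₁ := hK₁ un hunX hun1
    have hgb : (∫⁻ x in Ioo (0 : ℝ) 1, g x ^ r') ≤ ENNReal.ofReal C₂ := by
      calc (∫⁻ x in Ioo (0 : ℝ) 1, g x ^ r')
          = ∫⁻ x in Ioo (0 : ℝ) 1,
              ENNReal.ofReal (exp (r' * (1 + e⁻¹) * p * α * w x ^ 2)) := by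
            apply lintegral_congr
            intro x
            rw [hgdef]
            simp only []
            rw [ENNReal.ofReal_rpow_of_pos (exp_pos _), ← Real.exp_mul]
            ring_nf
        _ ≤ ENNReal.ofReal C₂ := hC₂
    have h1r : (0 : ℝ) ≤ 1 / r := by positivity
    have h1r' : (0 : ℝ) ≤ 1 / r' := by positivity
    have hle1r : 1 / r ≤ 1 := by
      rw [div_le_one (by linarith)]; linarith
    have hle1r' : 1 / r' ≤ 1 := by
      rw [div_le_one (by linarith)]; linarith
    have hK₁le : (∫⁻ x in Ioo (0 : ℝ) 1, f x ^ r) ^ (1 / r) ≤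
        ENNReal.ofReal (max K₁ 1) := by
      calc (∫⁻ x in Ioo (0 : ℝ) 1, f x ^ r) ^ (1 / r)
          ≤ ENNReal.ofReal (max K₁ 1) ^ (1 / r) := by
            apply ENNReal.rpow_le_rpow _ h1r
            exact hfb.trans (ENNReal.ofReal_le_ofReal (le_max_left _ _))
        _ ≤ ENNReal.ofReal (max K₁ 1) ^ (1 : ℝ) := by
            apply ENNReal.rpow_le_rpow_of_exponent_le _ hle1r
            exact ENNReal.one_le_ofReal.mpr (le_max_right _ _)
        _ = ENNReal.ofReal (max K₁ 1) := ENNReal.rpow_one _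
    have hC₂le : (∫⁻ x in Ioo (0 : ℝ) 1, g x ^ r') ^ (1 / r') ≤
        ENNReal.ofReal (max C₂ 1) := by
      calc (∫⁻ x in Ioo (0 : ℝ) 1, g x ^ r') ^ (1 / r')
          ≤ ENNReal.ofReal (max C₂ 1) ^ (1 / r') := by
            apply ENNReal.rpow_le_rpow _ h1r'
            exact hgb.trans (ENNReal.ofReal_le_ofReal (le_max_left _ _))
        _ ≤ ENNReal.ofReal (max C₂ 1) ^ (1 : ℝ) := by
            apply ENNReal.rpow_le_rpow_of_exponent_le _ hle1r'
            exact ENNReal.one_le_ofReal.mpr (le_max_right _ _)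
        _ = ENNReal.ofReal (max C₂ 1) := ENNReal.rpow_one _
    calc (∫⁻ x in Ioo (0 : ℝ) 1, ENNReal.ofReal (exp (p * α * (v n x) ^ 2)))
        ≤ ∫⁻ x in Ioo (0 : ℝ) 1, (f * g) x := step1
      _ ≤ (∫⁻ x in Ioo (0 : ℝ) 1, f x ^ r) ^ (1 / r) *
            (∫⁻ x in Ioo (0 : ℝ) 1, g x ^ r') ^ (1 / r') := step2
      _ ≤ ENNReal.ofReal (max K₁ 1) * ENNReal.ofReal (max C₂ 1) :=
          mul_le_mul' hK₁le hC₂le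
      _ = ENNReal.ofReal (max K₁ 1 * max C₂ 1) :=
          (ENNReal.ofReal_mul (le_trans zero_le_one (le_max_right K₁ 1))).symm
  -- individual bounds for every n
  have hall : ∀ n, ∃ Cn : ℝ,
      (∫⁻ x in Ioo (0 : ℝ) 1, ENNReal.ofReal (exp (p * α * (v n x) ^ 2))) ≤
        ENNReal.ofReal Cn := fun n => expFinite hω0 hTM (hvX n) hpα
  choose Cn hCn using hall
  refine ⟨max (max K₁ 1 * max C₂ 1) 0 + ∑ k ∈ Finset.range N, |Cn k|, fun n => ?_⟩
  have hsum0 : 0 ≤ ∑ k ∈ Finset.range N, |Cn k| :=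
    Finset.sum_nonneg fun _ _ => abs_nonneg _
  rcases le_or_gt N n with h | h
  · refine (hmain n h).trans (ENNReal.ofReal_le_ofReal ?_)
    have := le_max_left (max K₁ 1 * max C₂ 1) (0 : ℝ)
    linarith
  · refine (hCn n).trans (ENNReal.ofReal_le_ofReal ?_)
    have h1 : |Cn n| ≤ ∑ k ∈ Finset.range N, |Cn k| :=
      Finset.single_le_sum (f := fun k => |Cn k|) (fun _ _ => abs_nonneg _) (Finset.mem_range.mpr h)
    have h2 := le_abs_self (Cn n)
    have h3 := le_max_right (max K₁ 1 * max C₂ 1) (0 : ℝ)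
    linarith
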